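/- Let L ⊆ Ω be fields, let W ⊆ L be a finite subgroup of the additive group (L, +) with n elements, and let ξ ∈ Ω be such that the polynomial P(X) = ∏_{w ∈ W} (X − ξ − w) has all its coefficients in L. Then P is separable, the extension L(ξ)/L is a finite Galois extension, the map σ ↦ σ(ξ) − ξ is an injective group homomorphism from Gal(L(ξ)/L) into W, and consequently Gal(L(ξ)/L) is abelian and [L(ξ) : L] divides n. -/

import Mathlib

set_option synthInstance.maxHeartbeats 1000000
set_option maxHeartbeats 1000000


open IntermediateField Polynomial Classical in
/-- Let `L ⊆ Ω` be fields, `W ⊆ L` a finite subgroup of `(L,+)` with `n`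
elements, and `ξ ∈ Ω` such that `P X = ∏_{w ∈ W} (X - ξ - w)` has all coefficients in `L`.
Then `P` is separable, `L(ξ)/L` is a finite Galois extension, `σ ↦ σ ξ - ξ` is an injective
group homomorphism from `Gal(L(ξ)/L)` into `W`, hence `Gal(L(ξ)/L)` is abelian and
`[L(ξ):L]` divides `n`. -/
theorem stmt_10 {L Ω : Type*} [Field L] [Field Ω] [Algebra L Ω]
    (W : AddSubgroup L) (hWfin : (W : Set L).Finite) (n : ℕ) (hn : Nat.card W = n)
    (ξ : Ω) (P : Polynomial Ω)
    (hP : P = ∏ w ∈ hWfin.toFinset, (X - C (ξ + algebraMap L Ω w)))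
    (hcoeff : ∀ k : ℕ, P.coeff k ∈ (algebraMap L Ω).range) :
    P.Separable ∧
    FiniteDimensional L L⟮ξ⟯ ∧
    IsGalois L L⟮ξ⟯ ∧
    (∀ σ : L⟮ξ⟯ ≃ₐ[L] L⟮ξ⟯, ∃ w ∈ W,
      ((σ (AdjoinSimple.gen L ξ) - AdjoinSimple.gen L ξ : L⟮ξ⟯) : Ω) = algebraMap L Ω w) ∧
    (∀ σ τ : L⟮ξ⟯ ≃ₐ[L] L⟮ξ⟯,
      (σ * τ) (AdjoinSimple.gen L ξ) - AdjoinSimple.gen L ξ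
        = (σ (AdjoinSimple.gen L ξ) - AdjoinSimple.gen L ξ)
          + (τ (AdjoinSimple.gen L ξ) - AdjoinSimple.gen L ξ)) ∧
    (∀ σ τ : L⟮ξ⟯ ≃ₐ[L] L⟮ξ⟯,
      σ (AdjoinSimple.gen L ξ) - AdjoinSimple.gen L ξ
        = τ (AdjoinSimple.gen L ξ) - AdjoinSimple.gen L ξ → σ = τ) ∧
    (∀ σ τ : L⟮ξ⟯ ≃ₐ[L] L⟮ξ⟯, σ * τ = τ * σ) ∧
    Module.finrank L L⟮ξ⟯ ∣ n := by
  have hιinj : Function.Injective (algebraMap L Ω) := (algebraMap L Ω).injective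
  -- lift P to Q over L
  obtain ⟨Q, hQ⟩ : ∃ Q : L[X], Q.map (algebraMap L Ω) = P :=
    (Polynomial.mem_lifts _).mp ((Polynomial.lifts_iff_coeff_lifts P).mpr
      (fun k => by simpa using hcoeff k))
  have hPmonic : P.Monic := by
    rw [hP]; exact monic_prod_of_monic _ _ fun w _ => monic_X_sub_C _
  have hQmonic : Q.Monic := (hιinj.monic_map_iff).mpr (hQ ▸ hPmonic)
  -- separability
  have hsepP : P.Separable := by
    rw [hP]
    refine separable_prod_X_sub_C_iff'.mpr (fun a ha b hb hab => ?_)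
    have := hab; exact hιinj (add_left_cancel this)
  have hsepQ : Q.Separable := (separable_map _).mp (hQ ▸ hsepP)
  -- ξ is a root
  have h0W : (0:L) ∈ hWfin.toFinset := by simpa using W.zero_mem
  have hPξ : P.eval ξ = 0 := by
    rw [hP, eval_prod]
    exact Finset.prod_eq_zero h0W (by simp)
  have haeval : Polynomial.aeval ξ Q = 0 := by
    rw [Polynomial.aeval_def, Polynomial.eval₂_eq_eval_map, hQ, hPξ]
  have hint : IsIntegral L ξ := ⟨Q, hQmonic, haeval⟩
  have hfd : FiniteDimensional L L⟮ξ⟯ := IntermediateField.adjoin.finiteDimensional hint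
  -- map of Q to L⟮ξ⟯ factors as the product
  have hvalinj : Function.Injective (algebraMap L⟮ξ⟯ Ω) := (algebraMap L⟮ξ⟯ Ω).injective
  have hmap : Q.map (algebraMap L L⟮ξ⟯) =
      ∏ w ∈ hWfin.toFinset, (X - C (AdjoinSimple.gen L ξ + algebraMap L L⟮ξ⟯ w)) := by
    apply Polynomial.map_injective (algebraMap L⟮ξ⟯ Ω) hvalinj
    rw [Polynomial.map_map, ← IsScalarTower.algebraMap_eq, hQ, hP, Polynomial.map_prod]
    refine Finset.prod_congr rfl (fun w _ => ?_)
    have : (algebraMap L⟮ξ⟯ Ω) (AdjoinSimple.gen L ξ + algebraMap L L⟮ξ⟯ w)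
        = ξ + algebraMap L Ω w := by
      rw [map_add, AdjoinSimple.algebraMap_gen, ← IsScalarTower.algebraMap_apply]
    rw [Polynomial.map_sub, map_X, map_C, this]
  have hsplits : (Q.map (algebraMap L L⟮ξ⟯)).Splits := by
    rw [hmap]
    exact Splits.prod fun w _ => Splits.X_sub_C _
  have haevalgen : Polynomial.aeval (AdjoinSimple.gen L ξ) Q = 0 := by
    apply hvalinj
    rw [map_zero, ← Polynomial.aeval_algebraMap_apply, AdjoinSimple.algebraMap_gen, haeval]
  have hgenmem : AdjoinSimple.gen L ξ ∈ Q.rootSet L⟮ξ⟯ :=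
    (Polynomial.mem_rootSet).mpr ⟨hQmonic.ne_zero, haevalgen⟩
  have htop : Algebra.adjoin L (Q.rootSet L⟮ξ⟯) = ⊤ := by
    rw [eq_top_iff, ← (IntermediateField.adjoin.powerBasis hint).adjoin_gen_eq_top]
    refine Algebra.adjoin_le ?_
    rintro x hx
    rw [Set.mem_singleton_iff] at hx
    subst hx
    rw [IntermediateField.adjoin.powerBasis_gen]
    exact Algebra.subset_adjoin hgenmem
  have hsf : Q.IsSplittingField L L⟮ξ⟯ := ⟨hsplits, htop⟩
  have hGal : IsGalois L L⟮ξ⟯ := IsGalois.of_separable_splitting_field hsepQ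
  -- key: every automorphism moves the generator by an element of W
  have key : ∀ σ : L⟮ξ⟯ ≃ₐ[L] L⟮ξ⟯, ∃ w ∈ W,
      σ (AdjoinSimple.gen L ξ) - AdjoinSimple.gen L ξ = algebraMap L L⟮ξ⟯ w := by
    intro σ
    have h1 : Polynomial.aeval (σ (AdjoinSimple.gen L ξ)) Q = 0 := by
      have := Polynomial.aeval_algHom_apply (σ : L⟮ξ⟯ →ₐ[L] L⟮ξ⟯) (AdjoinSimple.gen L ξ) Q
      simp only [AlgEquiv.coe_toAlgHom] at this
      rw [this, haevalgen, map_zero]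
    have h2 : P.eval ((algebraMap L⟮ξ⟯ Ω) (σ (AdjoinSimple.gen L ξ))) = 0 := by
      rw [← hQ, Polynomial.eval_map, ← Polynomial.aeval_def,
        Polynomial.aeval_algebraMap_apply, h1, map_zero]
    rw [hP, Polynomial.eval_prod, Finset.prod_eq_zero_iff] at h2
    obtain ⟨w, hwmem, hw0⟩ := h2
    simp only [Polynomial.eval_sub, Polynomial.eval_X, Polynomial.eval_C, sub_eq_zero] at hw0
    refine ⟨w, by simpa using hwmem, ?_⟩
    apply hvalinj
    rw [map_sub, AdjoinSimple.algebraMap_gen, hw0, ← IsScalarTower.algebraMap_apply]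
    ring
  have item4 : ∀ σ : L⟮ξ⟯ ≃ₐ[L] L⟮ξ⟯, ∃ w ∈ W,
      ((σ (AdjoinSimple.gen L ξ) - AdjoinSimple.gen L ξ : L⟮ξ⟯) : Ω) = algebraMap L Ω w := by
    intro σ
    obtain ⟨w, hwW, hw⟩ := key σ
    refine ⟨w, hwW, ?_⟩
    rw [hw, IsScalarTower.algebraMap_apply L L⟮ξ⟯ Ω w]
    rfl
  have hom5 : ∀ σ τ : L⟮ξ⟯ ≃ₐ[L] L⟮ξ⟯,
      (σ * τ) (AdjoinSimple.gen L ξ) - AdjoinSimple.gen L ξ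
        = (σ (AdjoinSimple.gen L ξ) - AdjoinSimple.gen L ξ)
          + (τ (AdjoinSimple.gen L ξ) - AdjoinSimple.gen L ξ) := by
    intro σ τ
    obtain ⟨w, hwW, hw⟩ := key τ
    have hτ : τ (AdjoinSimple.gen L ξ) = AdjoinSimple.gen L ξ + algebraMap L L⟮ξ⟯ w := by
      rw [← hw]; ring
    rw [AlgEquiv.mul_apply, hτ, map_add, AlgEquiv.commutes]
    ring
  have inj6 : ∀ σ τ : L⟮ξ⟯ ≃ₐ[L] L⟮ξ⟯,
      σ (AdjoinSimple.gen L ξ) - AdjoinSimple.gen L ξ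
        = τ (AdjoinSimple.gen L ξ) - AdjoinSimple.gen L ξ → σ = τ := by
    intro σ τ h
    have hg : σ (AdjoinSimple.gen L ξ) = τ (AdjoinSimple.gen L ξ) := by
      have := sub_left_injective h; exact this
    have hext : (σ : L⟮ξ⟯ →ₐ[L] L⟮ξ⟯) = (τ : L⟮ξ⟯ →ₐ[L] L⟮ξ⟯) :=
      (IntermediateField.adjoin.powerBasis hint).algHom_ext
        (by simpa [IntermediateField.adjoin.powerBasis_gen] using hg)
    exact AlgEquiv.coe_algHom_injective hext
  have comm7 : ∀ σ τ : L⟮ξ⟯ ≃ₐ[L] L⟮ξ⟯, σ * τ = τ * σ := by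
    intro σ τ
    apply inj6
    rw [hom5, hom5, add_comm]
  -- cardinality
  haveI := hfd
  haveI := hGal
  haveI : Finite W := hWfin.to_subtype
  choose f hfW hf using key
  have hκinj : Function.Injective (algebraMap L L⟮ξ⟯) := (algebraMap L L⟮ξ⟯).injective
  have hfadd : ∀ σ τ : L⟮ξ⟯ ≃ₐ[L] L⟮ξ⟯, f (σ * τ) = f σ + f τ := by
    intro σ τ
    apply hκinj
    rw [map_add, ← hf, ← hf, ← hf, hom5]
  let φ : Additive (L⟮ξ⟯ ≃ₐ[L] L⟮ξ⟯) →+ L :=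
    { toFun := fun σ => f σ.toMul
      map_zero' := by
        apply hκinj
        show (algebraMap L L⟮ξ⟯) (f 1) = (algebraMap L L⟮ξ⟯) 0
        rw [← hf 1, map_zero]
        simp
      map_add' := fun σ τ => hfadd _ _ }
  have hφinj : Function.Injective φ := by
    intro σ τ h
    have h2 : σ.toMul = τ.toMul := by
      apply inj6
      rw [hf, hf]
      exact congrArg _ h
    exact Additive.toMul.injective h2
  have hrange : φ.range ≤ W := by
    rintro x ⟨σ, rfl⟩
    exact hfW _
  have hc1 : Nat.card (L⟮ξ⟯ ≃ₐ[L] L⟮ξ⟯) = Nat.card φ.range := by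
    rw [Nat.card_congr (AddMonoidHom.ofInjective hφinj).toEquiv.symm]
    exact (Nat.card_congr Additive.toMul).symm
  have hrank : Module.finrank L L⟮ξ⟯ = Nat.card (L⟮ξ⟯ ≃ₐ[L] L⟮ξ⟯) := by
    rw [IsGalois.card_aut_eq_finrank]
  have hdvd : Module.finrank L L⟮ξ⟯ ∣ n := by
    rw [hrank, hc1, ← hn]
    exact AddSubgroup.card_dvd_of_le hrange
  exact ⟨hsepP, hfd, hGal, item4, hom5, inj6, comm7, hdvd⟩
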